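/- There is no elusive pair with parameters (4,3,3): for every code C ⊆ H(4,3) with minimum distance 3, any subgroup X ≤ Aut(H(4,3)) that fixes Γ₁(C) setwise also fixes C setwise. -/

import Mathlib

set_option maxRecDepth 100000
set_option synthInstance.maxHeartbeats 2000000
set_option synthInstance.maxSize 5000
set_option maxHeartbeats 4000000

/-- The set of neighbours `Γ₁(C)` of a code `C` in `H(m,q)`. -/
def codeNbrs {m q : ℕ} (C : Set (Fin m → Fin q)) : Set (Fin m → Fin q) :=
  {v | v ∉ C ∧ ∃ c ∈ C, hammingDist v c = 1}

namespace Stmt19Aux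

abbrev Vt := Fin 4 → Fin 3

/-- The Hamming-graph automorphism determined by alphabet permutations and a
coordinate permutation, as an equivalence. -/
def gmap (f : Fin 4 → Equiv.Perm (Fin 3)) (σ : Equiv.Perm (Fin 4)) : Vt ≃ Vt where
  toFun v := fun i => f (σ⁻¹ i) (v (σ⁻¹ i))
  invFun v := fun i => (f i)⁻¹ (v (σ i))
  left_inv v := by funext i; simp
  right_inv v := by funext i; simp

lemma hd_perm (τ : Equiv.Perm (Fin 4)) (u v : Vt) :
    hammingDist (fun i => u (τ i)) (fun i => v (τ i)) = hammingDist u v := by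
  unfold hammingDist
  exact Finset.card_equiv τ (by simp)

lemma gmap_dist (f : Fin 4 → Equiv.Perm (Fin 3)) (σ : Equiv.Perm (Fin 4)) (u v : Vt) :
    hammingDist (gmap f σ u) (gmap f σ v) = hammingDist u v := by
  have h1 : hammingDist (gmap f σ u) (gmap f σ v)
      = hammingDist (fun i => u (σ⁻¹ i)) (fun i => v (σ⁻¹ i)) :=
    hammingDist_comp (fun i => ⇑(f (σ⁻¹ i))) (fun i => (f (σ⁻¹ i)).injective)
  rw [h1]
  exact hd_perm σ⁻¹ u v

/-- Vertices all of whose neighbours lie in `S`. -/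
def Dset (S : Set Vt) : Set Vt := {v | ∀ u, hammingDist u v = 1 → u ∈ S}

/-- The reconstruction of a code from its neighbour set. -/
def Rset (S : Set Vt) : Set Vt :=
  {v | v ∈ Dset S ∧ ¬ ∃ w, w ∈ Dset S ∧ ∃ w', w' ∈ Dset S ∧
    hammingDist v w = 2 ∧ hammingDist v w' = 2 ∧ hammingDist w w' = 3}

lemma Dset_image (E : Vt ≃ Vt) (hE : ∀ u v, hammingDist (E u) (E v) = hammingDist u v)
    (S : Set Vt) : Dset (E '' S) = E '' Dset S := by
  ext x
  constructor
  · intro hx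
    refine ⟨E.symm x, ?_, E.apply_symm_apply x⟩
    intro u hu
    have h1 : hammingDist (E u) x = 1 := by
      have := hE u (E.symm x)
      rw [E.apply_symm_apply] at this
      rw [this]; exact hu
    obtain ⟨y, hy, hyx⟩ := hx (E u) h1
    rwa [← E.injective hyx]
  · rintro ⟨y, hy, rfl⟩ u hu
    have h1 : hammingDist (E.symm u) y = 1 := by
      have := hE (E.symm u) y
      rw [E.apply_symm_apply] at this
      rw [← this]; exact hu
    exact ⟨E.symm u, hy (E.symm u) h1, E.apply_symm_apply u⟩

lemma Rset_image (E : Vt ≃ Vt) (hE : ∀ u v, hammingDist (E u) (E v) = hammingDist u v)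
    (S : Set Vt) : Rset (E '' S) = E '' Rset S := by
  ext x
  rw [show (x ∈ Rset (E '' S)) = (x ∈ Dset (E '' S) ∧ _) from rfl]
  rw [Dset_image E hE]
  constructor
  · rintro ⟨⟨y, hy, rfl⟩, hnp⟩
    refine ⟨y, ⟨hy, ?_⟩, rfl⟩
    rintro ⟨w, hw, w', hw', d1, d2, d3⟩
    refine hnp ⟨E w, ⟨w, hw, rfl⟩, E w', ⟨w', hw', rfl⟩, ?_, ?_, ?_⟩
    · rw [hE]; exact d1
    · rw [hE]; exact d2
    · rw [hE]; exact d3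
  · rintro ⟨y, ⟨hy, hnp⟩, rfl⟩
    refine ⟨⟨y, hy, rfl⟩, ?_⟩
    rintro ⟨w, ⟨w0, hw0, rfl⟩, w', ⟨w0', hw0', rfl⟩, d1, d2, d3⟩
    refine hnp ⟨w0, hw0, w0', hw0', ?_, ?_, ?_⟩
    · rw [← hE y w0]; exact d1
    · rw [← hE y w0']; exact d2
    · rw [← hE w0 w0']; exact d3

/-! ### Support sets -/

def sup (x y : Vt) : Finset (Fin 4) := Finset.univ.filter (fun m => x m ≠ y m)

lemma hd_sup (x y : Vt) : hammingDist x y = (sup x y).card := rfl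

lemma mem_sup {x y : Vt} {m : Fin 4} : m ∈ sup x y ↔ x m ≠ y m := by simp [sup]

/-! ### Basic code lemmas -/

variable {C : Set Vt}

lemma mem_Dset_of_mem (hmin : ∀ u ∈ C, ∀ v ∈ C, u ≠ v → 3 ≤ hammingDist u v)
    {c : Vt} (hc : c ∈ C) : c ∈ Dset (codeNbrs C) := by
  intro u hu
  refine ⟨?_, c, hc, hu⟩
  intro huC
  have hne : u ≠ c := by
    intro h; rw [h, hammingDist_self] at hu; exact one_ne_zero hu.symm
  have := hmin u huC c hc hne
  omega

lemma two_le_dist (hmin : ∀ u ∈ C, ∀ v ∈ C, u ≠ v → 3 ≤ hammingDist u v)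
    {v : Vt} (hv : v ∈ Dset (codeNbrs C)) (hvC : v ∉ C) :
    ∀ e ∈ C, 2 ≤ hammingDist v e := by
  intro e he
  by_contra h
  push_neg at h
  interval_cases hde : hammingDist v e
  · exact hvC (hammingDist_eq_zero.mp hde ▸ he)
  · have : e ∈ codeNbrs C := hv e (by rw [hammingDist_comm]; exact hde)
    exact this.1 he

lemma covering (hmin : ∀ u ∈ C, ∀ v ∈ C, u ≠ v → 3 ≤ hammingDist u v)
    {v : Vt} (hv : v ∈ Dset (codeNbrs C)) (hvC : v ∉ C) (i : Fin 4) (a : Fin 3)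
    (ha : a ≠ v i) : ∃ e ∈ C, hammingDist v e = 2 ∧ e i = a := by
  set u := Function.update v i a with hu
  have h1 : hammingDist u v = 1 := by
    rw [hd_sup]
    have : sup u v = {i} := by
      ext m
      rw [mem_sup, Finset.mem_singleton]
      constructor
      · intro hm
        by_contra hmi
        exact hm (by rw [hu, Function.update_apply, if_neg hmi])
      · intro hm
        rw [hm, hu, Function.update_self]
        exact ha
    rw [this, Finset.card_singleton]
  obtain ⟨huC, e, he, hde⟩ := hv u h1
  have h3 : 2 ≤ hammingDist v e := two_le_dist hmin hv hvC e he
  have h2 : hammingDist v e ≤ 2 := by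
    have := hammingDist_triangle v u e
    rw [hammingDist_comm v u, h1, hde] at this
    omega
  refine ⟨e, he, by omega, ?_⟩
  by_contra hne
  have hie : i ∈ sup u e := mem_sup.mpr (by rw [hu, Function.update_self]; exact fun h => hne h.symm)
  have hcard1 : (sup u e).card = 1 := by rw [← hd_sup]; exact hde
  obtain ⟨b, hb⟩ := Finset.card_eq_one.mp hcard1
  have hbi : b = i := by rw [hb] at hie; exact (Finset.mem_singleton.mp hie).symm
  have hsube : sup v e ⊆ {i} := by
    intro m hm
    rw [Finset.mem_singleton]
    by_contra hmi
    have hm1 : u m = e m := by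
      have : m ∉ sup u e := by rw [hb, hbi]; simpa using hmi
      exact of_not_not (fun h => this (mem_sup.mpr h))
    have hm2 : u m = v m := by rw [hu, Function.update_apply, if_neg hmi]
    exact (mem_sup.mp hm) (hm2 ▸ hm1)
  have : hammingDist v e ≤ 1 := by
    rw [hd_sup]
    calc (sup v e).card ≤ ({i} : Finset (Fin 4)).card := Finset.card_le_card hsube
    _ = 1 := Finset.card_singleton i
  omega

lemma fin3_facts : ∀ x : Fin 3, x + 1 ≠ x ∧ x + 2 ≠ x ∧ x + 1 ≠ x + 2 ∧ x ≠ x + 1 ∧ x ≠ x + 2 := by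
  decide

/-- Step C: a non-codeword in `Dset` sees two codewords at distance 2 that are at
distance 3 from each other. -/
lemma phantom_pair (hmin : ∀ u ∈ C, ∀ v ∈ C, u ≠ v → 3 ≤ hammingDist u v)
    {v : Vt} (hv : v ∈ Dset (codeNbrs C)) (hvC : v ∉ C) :
    ∃ w, w ∈ Dset (codeNbrs C) ∧ ∃ w', w' ∈ Dset (codeNbrs C) ∧
      hammingDist v w = 2 ∧ hammingDist v w' = 2 ∧ hammingDist w w' = 3 := by
  obtain ⟨e, he, hde, he0⟩ := covering hmin hv hvC 0 (v 0 + 1) (fin3_facts (v 0)).1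
  obtain ⟨e', he', hde', he'0⟩ := covering hmin hv hvC 0 (v 0 + 2) (fin3_facts (v 0)).2.1
  have hne : e ≠ e' := by
    intro h
    rw [h, he'0] at he0
    exact (fin3_facts (v 0)).2.2.1 he0.symm
  have h3 : 3 ≤ hammingDist e e' := hmin e he e' he' hne
  have hsub : sup e e' ⊆ sup v e ∪ sup v e' := by
    intro m hm
    rw [Finset.mem_union, mem_sup, mem_sup]
    by_contra h
    push_neg at h
    exact (mem_sup.mp hm) (h.1.symm.trans h.2)
  have h0i : (0 : Fin 4) ∈ sup v e ∩ sup v e' := by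
    rw [Finset.mem_inter, mem_sup, mem_sup, he0, he'0]
    exact ⟨fun h => (fin3_facts (v 0)).2.2.2.1 h, fun h => (fin3_facts (v 0)).2.2.2.2 h⟩
  have hc1 : (sup v e).card = 2 := by rw [← hd_sup]; exact hde
  have hc2 : (sup v e').card = 2 := by rw [← hd_sup]; exact hde'
  have hcui : (sup v e ∪ sup v e').card + (sup v e ∩ sup v e').card = 4 := by
    rw [Finset.card_union_add_card_inter, hc1, hc2]
  have hipos : 1 ≤ (sup v e ∩ sup v e').card := Finset.card_pos.mpr ⟨0, h0i⟩
  have hle : hammingDist e e' ≤ 3 := by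
    rw [hd_sup]
    calc (sup e e').card ≤ (sup v e ∪ sup v e').card := Finset.card_le_card hsub
    _ ≤ 3 := by omega
  exact ⟨e, mem_Dset_of_mem hmin he, e', mem_Dset_of_mem hmin he', hde, hde', by omega⟩

/-! ### Normalisation machinery for Step D -/

def p3 (a b : Fin 3) : Equiv.Perm (Fin 3) :=
  (Equiv.swap (Equiv.swap a 0 b) 1) * (Equiv.swap a 0)

lemma p3_spec : ∀ a b : Fin 3, a ≠ b →
    p3 a b a = 0 ∧ p3 a b b = 1 ∧ ∀ x, x ≠ a → x ≠ b → p3 a b x = 2 := by decide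

def p4 (a b c : Fin 4) : Equiv.Perm (Fin 4) :=
  (Equiv.swap ((Equiv.swap (Equiv.swap a 0 b) 1) ((Equiv.swap a 0) c)) 2)
    * ((Equiv.swap (Equiv.swap a 0 b) 1) * (Equiv.swap a 0))

lemma p4_spec : ∀ a b c : Fin 4, a ≠ b → a ≠ c → b ≠ c →
    p4 a b c a = 0 ∧ p4 a b c b = 1 ∧ p4 a b c c = 2 ∧
      ∀ x, x ≠ a → x ≠ b → x ≠ c → p4 a b c x = 3 := by decide

lemma fourth : ∀ i j k : Fin 4, i ≠ j → i ≠ k → j ≠ k →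
    ∃ l, l ≠ i ∧ l ≠ j ∧ l ≠ k := by decide

def Phi (α β γ δ : Equiv.Perm (Fin 3)) : Fin 4 → Equiv.Perm (Fin 3) :=
  fun m => if m = 0 then α else if m = 1 then β else if m = 2 then γ else δ

lemma Phi0 {α β γ δ} : Phi α β γ δ 0 = α := by simp [Phi]
lemma Phi1 {α β γ δ} : Phi α β γ δ 1 = β := by simp [Phi]
lemma Phi2 {α β γ δ} : Phi α β γ δ 2 = γ := by simp [Phi]
lemma Phi3 {α β γ δ} : Phi α β γ δ 3 = δ := by simp [Phi]

def cstar : Vt := ![1,1,0,0]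
def wstar : Vt := ![0,0,0,0]
def wstar' : Vt := ![2,1,1,0]

/-- The normalized unsatisfiable configuration, checked by `decide`. -/
theorem normD :
    ∀ e1 : Vt, (e1 3 = 1 ∧ hammingDist wstar e1 = 2 ∧ 2 ≤ hammingDist wstar' e1
        ∧ (e1 = cstar ∨ 3 ≤ hammingDist e1 cstar)) →
    ∀ e2 : Vt, (e2 3 = 2 ∧ hammingDist wstar e2 = 2 ∧ 2 ≤ hammingDist wstar' e2
        ∧ (e2 = cstar ∨ 3 ≤ hammingDist e2 cstar) ∧ (e2 = e1 ∨ 3 ≤ hammingDist e1 e2)) →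
    ∀ e3 : Vt, (e3 1 = 0 ∧ hammingDist wstar' e3 = 2 ∧ 2 ≤ hammingDist wstar e3
        ∧ (e3 = cstar ∨ 3 ≤ hammingDist e3 cstar) ∧ (e3 = e1 ∨ 3 ≤ hammingDist e1 e3)
        ∧ (e3 = e2 ∨ 3 ≤ hammingDist e2 e3)) →
    ∀ e4 : Vt, (e4 3 = 1 ∧ hammingDist wstar' e4 = 2 ∧ 2 ≤ hammingDist wstar e4
        ∧ (e4 = cstar ∨ 3 ≤ hammingDist e4 cstar) ∧ (e4 = e1 ∨ 3 ≤ hammingDist e1 e4)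
        ∧ (e4 = e2 ∨ 3 ≤ hammingDist e2 e4) ∧ (e4 = e3 ∨ 3 ≤ hammingDist e3 e4)) →
    ∀ e5 : Vt, (e5 3 = 2 ∧ hammingDist wstar' e5 = 2 ∧ 2 ≤ hammingDist wstar e5
        ∧ (e5 = cstar ∨ 3 ≤ hammingDist e5 cstar) ∧ (e5 = e1 ∨ 3 ≤ hammingDist e1 e5)
        ∧ (e5 = e2 ∨ 3 ≤ hammingDist e2 e5) ∧ (e5 = e3 ∨ 3 ≤ hammingDist e3 e5)
        ∧ (e5 = e4 ∨ 3 ≤ hammingDist e4 e5)) → False := by decide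

/-- Step D: a codeword cannot see two `Dset` elements at distance 2 from it and
distance 3 from each other. -/
lemma stepD (hmin : ∀ u ∈ C, ∀ v ∈ C, u ≠ v → 3 ≤ hammingDist u v)
    {c w w' : Vt} (hc : c ∈ C)
    (hw : w ∈ Dset (codeNbrs C)) (hw' : w' ∈ Dset (codeNbrs C))
    (d1 : hammingDist c w = 2) (d2 : hammingDist c w' = 2)
    (d3 : hammingDist w w' = 3) : False := by
  -- the two "phantoms" are not codewords
  have hwC : w ∉ C := by
    intro h
    have hne : c ≠ w := by intro e; rw [e, hammingDist_self] at d1; omega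
    have := hmin c hc w h hne; omega
  have hw'C : w' ∉ C := by
    intro h
    have hne : c ≠ w' := by intro e; rw [e, hammingDist_self] at d2; omega
    have := hmin c hc w' h hne; omega
  -- support analysis
  have hc1 : (sup c w).card = 2 := by rw [← hd_sup]; exact d1
  have hc2 : (sup c w').card = 2 := by rw [← hd_sup]; exact d2
  have hc3 : (sup w w').card = 3 := by rw [← hd_sup]; exact d3
  have hsub3 : sup w w' ⊆ sup c w ∪ sup c w' := by
    intro m hm
    rw [Finset.mem_union, mem_sup, mem_sup]
    by_contra h
    push_neg at h
    exact (mem_sup.mp hm) (h.1.symm.trans h.2)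
  have hu3 : 3 ≤ (sup c w ∪ sup c w').card := by
    rw [← hc3]; exact Finset.card_le_card hsub3
  have hui : (sup c w ∪ sup c w').card + (sup c w ∩ sup c w').card = 4 := by
    rw [Finset.card_union_add_card_inter, hc1, hc2]
  have hi1 : (sup c w ∩ sup c w').card ≤ 1 := by omega
  have hine : (sup c w ∩ sup c w').Nonempty := by
    rw [Finset.nonempty_iff_ne_empty]
    intro h
    have hz : (sup c w ∩ sup c w').card = 0 := by rw [h]; rfl
    have hsub : sup c w ∪ sup c w' ⊆ sup w w' := by
      intro m hm
      have hm' : m ∉ sup c w ∩ sup c w' := by rw [h]; exact Finset.notMem_empty m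
      rw [Finset.mem_inter, mem_sup, mem_sup] at hm'
      rw [Finset.mem_union, mem_sup, mem_sup] at hm
      rw [mem_sup]
      rcases hm with h1 | h2
      · have h2 : c m = w' m := of_not_not (fun h2 => hm' ⟨h1, h2⟩)
        intro heq; exact h1 (heq ▸ h2)
      · have h1 : c m = w m := of_not_not (fun h1 => hm' ⟨h1, h2⟩)
        intro heq; exact h2 (heq ▸ h1)
    have : (sup c w ∪ sup c w').card ≤ 3 := by
      rw [← hc3]; exact Finset.card_le_card hsub
    omega
  obtain ⟨i, hi⟩ := hine
  rw [Finset.mem_inter] at hi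
  -- extract j with sup c w = {i, j}
  obtain ⟨a, b, hab, hs1e⟩ := Finset.card_eq_two.mp hc1
  have hia : i = a ∨ i = b := by
    have := hi.1; rw [hs1e] at this; simpa using this
  obtain ⟨j, hij, hs1⟩ : ∃ j, i ≠ j ∧ sup c w = {i, j} := by
    rcases hia with h | h
    · exact ⟨b, h ▸ hab, by rw [hs1e, h]⟩
    · exact ⟨a, h ▸ hab.symm, by rw [hs1e, h, Finset.pair_comm]⟩
  obtain ⟨a', b', hab', hs2e⟩ := Finset.card_eq_two.mp hc2
  have hia' : i = a' ∨ i = b' := by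
    have := hi.2; rw [hs2e] at this; simpa using this
  obtain ⟨k, hik, hs2⟩ : ∃ k, i ≠ k ∧ sup c w' = {i, k} := by
    rcases hia' with h | h
    · exact ⟨b', h ▸ hab', by rw [hs2e, h]⟩
    · exact ⟨a', h ▸ hab'.symm, by rw [hs2e, h, Finset.pair_comm]⟩
  have hjmem : j ∈ sup c w := by rw [hs1]; simp
  have hkmem : k ∈ sup c w' := by rw [hs2]; simp
  have hjs2 : j ∉ sup c w' := by
    intro h
    have h2 : j ∈ sup c w ∩ sup c w' := Finset.mem_inter.mpr ⟨hjmem, h⟩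
    exact hij (Finset.card_le_one.mp hi1 i (Finset.mem_inter.mpr hi) j h2)
  have hks1 : k ∉ sup c w := by
    intro h
    have h2 : k ∈ sup c w ∩ sup c w' := Finset.mem_inter.mpr ⟨h, hkmem⟩
    exact hik (Finset.card_le_one.mp hi1 i (Finset.mem_inter.mpr hi) k h2)
  have hjk : j ≠ k := fun h => hjs2 (h ▸ hkmem)
  -- value facts
  have hciw : c i ≠ w i := mem_sup.mp hi.1
  have hciw' : c i ≠ w' i := mem_sup.mp hi.2
  have hcjw : c j ≠ w j := mem_sup.mp hjmem
  have hcjw' : c j = w' j := of_not_not (fun h => hjs2 (mem_sup.mpr h))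
  have hckw : c k = w k := of_not_not (fun h => hks1 (mem_sup.mpr h))
  have hckw' : c k ≠ w' k := mem_sup.mp hkmem
  have hwjw' : w j ≠ w' j := fun h => hcjw (hcjw'.trans h.symm)
  have hwkw' : w k ≠ w' k := fun h => hckw' (hckw.trans h)
  -- sup w w' = {i, j, k}
  have hs3 : sup w w' = {i, j, k} := by
    have hsub' : sup w w' ⊆ {i, j, k} := by
      intro m hm
      have := hsub3 hm
      rw [hs1, hs2] at this
      simp only [Finset.mem_union, Finset.mem_insert, Finset.mem_singleton] at this
      simp only [Finset.mem_insert, Finset.mem_singleton]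
      tauto
    have hcard : ({i, j, k} : Finset (Fin 4)).card ≤ (sup w w').card := by
      rw [hc3, Finset.card_insert_of_notMem (by simp [hij, hik]),
        Finset.card_insert_of_notMem (by simp [hjk]), Finset.card_singleton]
    exact Finset.eq_of_subset_of_card_le hsub' hcard
  have hwiw' : w i ≠ w' i := by
    have : i ∈ sup w w' := by rw [hs3]; simp
    exact mem_sup.mp this
  -- the fourth coordinate
  obtain ⟨l, hli, hlj, hlk⟩ := fourth i j k hij hik hjk
  have hclw : c l = w l := of_not_not (fun h => by
    have : l ∈ sup c w := mem_sup.mpr h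
    rw [hs1] at this
    simp [hli, hlj] at this)
  have hwlw' : w l = w' l := of_not_not (fun h => by
    have : l ∈ sup w w' := mem_sup.mpr h
    rw [hs3] at this
    simp [hli, hlj, hlk] at this)
  -- the normalizing automorphism
  set π := p4 i j k with hπdef
  obtain ⟨hπi, hπj, hπk, hπrest⟩ := p4_spec i j k hij hik hjk
  have hπl : π l = 3 := hπrest l hli hlj hlk
  have hinv0 : π⁻¹ 0 = i := by rw [← hπi]; exact π.symm_apply_apply i
  have hinv1 : π⁻¹ 1 = j := by rw [← hπj]; exact π.symm_apply_apply j
  have hinv2 : π⁻¹ 2 = k := by rw [← hπk]; exact π.symm_apply_apply k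
  have hinv3 : π⁻¹ 3 = l := by rw [← hπl]; exact π.symm_apply_apply l
  set A := p3 (w i) (c i) with hA
  set B := p3 (w j) (c j) with hB
  set G := p3 (w k) (w' k) with hG
  set D := p3 (w l) (w l + 1) with hD
  obtain ⟨hA1, hA2, hA3⟩ := p3_spec (w i) (c i) (Ne.symm hciw)
  obtain ⟨hB1, hB2, hB3⟩ := p3_spec (w j) (c j) (Ne.symm hcjw)
  obtain ⟨hG1, hG2, hG3⟩ := p3_spec (w k) (w' k) hwkw'
  obtain ⟨hD1, hD2, hD3⟩ := p3_spec (w l) (w l + 1) ((fin3_facts (w l)).2.2.2.1)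
  set F := gmap (fun x => Phi A B G D (π x)) π with hF
  have hFdist : ∀ u v : Vt, hammingDist (F u) (F v) = hammingDist u v :=
    gmap_dist _ π
  have hFapp : ∀ (v : Vt) (m : Fin 4), F v m = Phi A B G D m (v (π⁻¹ m)) := by
    intro v m
    show Phi A B G D (π (π⁻¹ m)) (v (π⁻¹ m)) = _
    rw [show π (π⁻¹ m) = m from π.apply_symm_apply m]
  have hF0 : ∀ v : Vt, F v 0 = A (v i) := by intro v; rw [hFapp, hinv0, Phi0]
  have hF1 : ∀ v : Vt, F v 1 = B (v j) := by intro v; rw [hFapp, hinv1, Phi1]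
  have hF2 : ∀ v : Vt, F v 2 = G (v k) := by intro v; rw [hFapp, hinv2, Phi2]
  have hF3 : ∀ v : Vt, F v 3 = D (v l) := by intro v; rw [hFapp, hinv3, Phi3]
  have hall : ∀ m : Fin 4, m = 0 ∨ m = 1 ∨ m = 2 ∨ m = 3 := by decide
  have hFc : F c = cstar := by
    funext m
    rcases hall m with rfl | rfl | rfl | rfl
    · rw [hF0, hA2]; rfl
    · rw [hF1, hB2]; rfl
    · rw [hF2, hckw, hG1]; rfl
    · rw [hF3, hclw, hD1]; rfl
  have hFw : F w = wstar := by
    funext m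
    rcases hall m with rfl | rfl | rfl | rfl
    · rw [hF0, hA1]; rfl
    · rw [hF1, hB1]; rfl
    · rw [hF2, hG1]; rfl
    · rw [hF3, hD1]; rfl
  have hFw' : F w' = wstar' := by
    funext m
    rcases hall m with rfl | rfl | rfl | rfl
    · rw [hF0, hA3 (w' i) (Ne.symm hwiw') (Ne.symm hciw')]; rfl
    · rw [hF1, ← hcjw', hB2]; rfl
    · rw [hF2, hG2]; rfl
    · rw [hF3, ← hwlw', hD1]; rfl
  -- the five covering codewords
  obtain ⟨e1, he1, hde1, hv1⟩ := covering hmin hw hwC l (w l + 1) (fin3_facts (w l)).1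
  obtain ⟨e2, he2, hde2, hv2⟩ := covering hmin hw hwC l (w l + 2) (fin3_facts (w l)).2.1
  obtain ⟨e3, he3, hde3, hv3⟩ := covering hmin hw' hw'C j (w j) hwjw'
  obtain ⟨e4, he4, hde4, hv4⟩ := covering hmin hw' hw'C l (w l + 1)
    (by rw [← hwlw']; exact (fin3_facts (w l)).1)
  obtain ⟨e5, he5, hde5, hv5⟩ := covering hmin hw' hw'C l (w l + 2)
    (by rw [← hwlw']; exact (fin3_facts (w l)).2.1)
  -- transfer conditions through F
  have compat : ∀ x y : Vt, x ∈ C → y ∈ C → (F y = F x ∨ 3 ≤ hammingDist (F x) (F y)) := by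
    intro x y hx hy
    rcases eq_or_ne y x with h | h
    · left; rw [h]
    · right; rw [hFdist]; exact hmin x hx y hy (Ne.symm h)
  have compatc : ∀ y : Vt, y ∈ C → (F y = cstar ∨ 3 ≤ hammingDist (F y) cstar) := by
    intro y hy
    rcases eq_or_ne y c with h | h
    · left; rw [h, hFc]
    · right; rw [← hFc, hFdist]; exact hmin y hy c hc h
  have hdw : ∀ y : Vt, hammingDist wstar (F y) = hammingDist w y := by
    intro y; rw [← hFw, hFdist]
  have hdw' : ∀ y : Vt, hammingDist wstar' (F y) = hammingDist w' y := by
    intro y; rw [← hFw', hFdist]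
  exact normD (F e1)
    ⟨by rw [hF3, hv1, hD2], by rw [hdw]; exact hde1,
      by rw [hdw']; exact two_le_dist hmin hw' hw'C e1 he1, compatc e1 he1⟩
    (F e2)
    ⟨by rw [hF3, hv2, hD3 (w l + 2) (Ne.symm (fin3_facts (w l)).2.2.2.2) (Ne.symm (fin3_facts (w l)).2.2.1)],
      by rw [hdw]; exact hde2,
      by rw [hdw']; exact two_le_dist hmin hw' hw'C e2 he2, compatc e2 he2,
      compat e1 e2 he1 he2⟩
    (F e3)
    ⟨by rw [hF1, hv3, hB1], by rw [hdw']; exact hde3,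
      by rw [hdw]; exact two_le_dist hmin hw hwC e3 he3, compatc e3 he3,
      compat e1 e3 he1 he3, compat e2 e3 he2 he3⟩
    (F e4)
    ⟨by rw [hF3, hv4, hD2], by rw [hdw']; exact hde4,
      by rw [hdw]; exact two_le_dist hmin hw hwC e4 he4, compatc e4 he4,
      compat e1 e4 he1 he4, compat e2 e4 he2 he4, compat e3 e4 he3 he4⟩
    (F e5)
    ⟨by rw [hF3, hv5, hD3 (w l + 2) (Ne.symm (fin3_facts (w l)).2.2.2.2) (Ne.symm (fin3_facts (w l)).2.2.1)],
      by rw [hdw']; exact hde5,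
      by rw [hdw]; exact two_le_dist hmin hw hwC e5 he5, compatc e5 he5,
      compat e1 e5 he1 he5, compat e2 e5 he2 he5, compat e3 e5 he3 he5, compat e4 e5 he4 he5⟩

/-- The reconstruction theorem: `Rset` recovers `C` from its neighbour set. -/
lemma recon (C : Set Vt) (hmin : ∀ u ∈ C, ∀ v ∈ C, u ≠ v → 3 ≤ hammingDist u v) :
    Rset (codeNbrs C) = C := by
  ext v
  constructor
  · rintro ⟨hvD, hnp⟩
    by_contra hvC
    exact hnp (phantom_pair hmin hvD hvC)
  · intro hv
    refine ⟨mem_Dset_of_mem hmin hv, ?_⟩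
    rintro ⟨w, hw, w', hw', d1, d2, d3⟩
    exact stepD hmin hv hw hw' d1 d2 d3

end Stmt19Aux

open Stmt19Aux in
/-- There is no elusive pair with parameters `(4,3,3)`: for any code `C ⊆ H(4,3)` of
minimum distance 3, every automorphism of `H(4,3)` (given by alphabet permutations
`f i` in each coordinate followed by a permutation `σ` of coordinates) that fixes
`Γ₁(C)` setwise also fixes `C` setwise. -/
theorem stmt19 (C : Set (Fin 4 → Fin 3))
    (hmin : ∀ u ∈ C, ∀ v ∈ C, u ≠ v → 3 ≤ hammingDist u v)
    (hex : ∃ u ∈ C, ∃ v ∈ C, u ≠ v ∧ hammingDist u v = 3)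
    (f : Fin 4 → Equiv.Perm (Fin 3)) (σ : Equiv.Perm (Fin 4))
    (hfix : (fun v : Fin 4 → Fin 3 => fun i => f (σ⁻¹ i) (v (σ⁻¹ i))) '' codeNbrs C
      = codeNbrs C) :
    (fun v : Fin 4 → Fin 3 => fun i => f (σ⁻¹ i) (v (σ⁻¹ i))) '' C = C := by
  have hg : (fun v : Fin 4 → Fin 3 => fun i => f (σ⁻¹ i) (v (σ⁻¹ i))) = ⇑(gmap f σ) := rfl
  rw [hg] at hfix ⊢
  have h1 := recon C hmin
  calc ⇑(gmap f σ) '' C = ⇑(gmap f σ) '' Rset (codeNbrs C) := by rw [h1]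
    _ = Rset (⇑(gmap f σ) '' codeNbrs C) := (Rset_image (gmap f σ) (gmap_dist f σ) _).symm
    _ = Rset (codeNbrs C) := by rw [hfix]
    _ = C := h1
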